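/- Let G be a graph on n vertices with a uniform automorphism φ of size k > 1, and let M be a symmetric automorphism compatible matrix on G. Let r = n/k. If k is odd, M has at most r simple eigenvalues; if k is even, M has at most 2r simple eigenvalues. -/

import Mathlib

open Matrix Polynomial Finset

lemma my_charmatrix_eq {m R : Type*} [Fintype m] [DecidableEq m] [CommRing R] (A : Matrix m m R) :
    charmatrix A = Matrix.diagonal (fun _ => (X : R[X])) - A.map C := by
  ext i j
  rw [charmatrix_apply]
  rfl

lemma my_charpoly_conj {m R : Type*} [Fintype m] [DecidableEq m] [CommRing R]
    (U V A : Matrix m m R) (hUV : U * V = 1) :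
    (U * A * V).charpoly = A.charpoly := by
  set D : Matrix m m R[X] := Matrix.diagonal (fun _ => (X : R[X])) with hDdef
  have hD : ∀ B : Matrix m m R[X], D * B = B * D := by
    intro B
    ext i j
    simp [hDdef, Matrix.mul_apply, Matrix.diagonal, mul_comm]
  have hmap : ∀ (P Q : Matrix m m R), (P * Q).map (C : R →+* R[X]) = P.map C * Q.map C := by
    intro P Q
    exact Matrix.map_mul
  have hUV' : (U.map (C : R →+* R[X])) * (V.map C) = 1 := by
    rw [← hmap, hUV]; simp
  have key : charmatrix (U * A * V)
      = (U.map (C : R →+* R[X])) * charmatrix A * (V.map C) := by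
    rw [my_charmatrix_eq, my_charmatrix_eq]
    rw [Matrix.mul_sub, Matrix.sub_mul]
    congr 1
    · rw [← hD, Matrix.mul_assoc, hUV', Matrix.mul_one]
    · rw [hmap, hmap]
  unfold Matrix.charpoly
  rw [key, Matrix.det_mul, Matrix.det_mul, mul_comm, ← mul_assoc, mul_comm (V.map C).det,
    ← Matrix.det_mul, hUV', Matrix.det_one, one_mul]

lemma my_charpoly_diagonal {m R : Type*} [Fintype m] [DecidableEq m] [CommRing R] (d : m → R) :
    (Matrix.diagonal d).charpoly = ∏ i, (X - C (d i)) := by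
  unfold Matrix.charpoly
  have : charmatrix (Matrix.diagonal d) = Matrix.diagonal (fun i => (X : R[X]) - C (d i)) := by
    ext i j
    by_cases h : i = j
    · subst h; simp
    · simp [h, Matrix.diagonal_apply_ne _ h]
  rw [this, Matrix.det_diagonal]

lemma my_roots_charpoly {N : ℕ} (M : Matrix (Fin N) (Fin N) ℝ) (hH : M.IsHermitian) :
    M.charpoly.roots = Finset.univ.val.map hH.eigenvalues := by
  have h1 : M.charpoly = (Matrix.diagonal hH.eigenvalues).charpoly := by
    conv_lhs => rw [hH.spectral_theorem]
    have hu : (hH.eigenvectorUnitary : Matrix (Fin N) (Fin N) ℝ) *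
        (star (hH.eigenvectorUnitary : Matrix (Fin N) (Fin N) ℝ)) = 1 :=
      Matrix.mem_unitaryGroup_iff.mp hH.eigenvectorUnitary.2
    rw [Unitary.conjStarAlgAut_apply]
    rw [my_charpoly_conj _ _ _ hu]
    congr 1
  rw [h1, my_charpoly_diagonal]
  rw [Polynomial.roots_prod]
  · simp [Polynomial.roots_X_sub_C, Multiset.bind_singleton]
  · rw [Finset.prod_ne_zero_iff]
    intro i _
    exact Polynomial.X_sub_C_ne_zero _

lemma my_eigenspace_le {N : ℕ} {M : Matrix (Fin N) (Fin N) ℝ}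
    (B : Module.Basis (Fin N) ℝ (Fin N → ℝ)) (lam : Fin N → ℝ)
    (hMB : ∀ j, M *ᵥ (B j) = lam j • B j)
    (μ : ℝ) (i0 : Fin N) (huniq : ∀ j, lam j = μ → j = i0)
    (v : Fin N → ℝ) (hv : M *ᵥ v = μ • v) :
    v = B.repr v i0 • B i0 := by
  have key : ∀ j, (B.repr v j * (lam j - μ)) = 0 := by
    apply Fintype.linearIndependent_iff.mp B.linearIndependent
    have h1 : ∑ j, (B.repr v j * (lam j - μ)) • B j
        = (∑ j, B.repr v j • (lam j • B j)) - μ • ∑ j, B.repr v j • B j := by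
      rw [Finset.smul_sum, ← Finset.sum_sub_distrib]
      refine Finset.sum_congr rfl fun j _ => ?_
      module
    have h2 : ∑ j, B.repr v j • (lam j • B j) = M *ᵥ v := by
      conv_rhs => rw [← B.sum_repr v]
      rw [show M *ᵥ (∑ j, B.repr v j • B j) = M.mulVecLin (∑ j, B.repr v j • B j) from rfl,
        map_sum]
      refine Finset.sum_congr rfl fun j _ => ?_
      rw [_root_.map_smul, Matrix.mulVecLin_apply, hMB j]
    rw [h1, h2, B.sum_repr v, hv, sub_self]
  have hz : ∀ j, j ≠ i0 → B.repr v j • B j = 0 := by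
    intro j hj
    have hlj : lam j - μ ≠ 0 := by
      intro h
      exact hj (huniq j (by linarith [sub_eq_zero.mp h]))
    have := key j
    rcases mul_eq_zero.mp this with h | h
    · rw [h, zero_smul]
    · exact absurd h hlj
  conv_lhs => rw [← B.sum_repr v]
  rw [Finset.sum_eq_single i0]
  · intro j _ hj; exact hz j hj
  · intro h; exact absurd (Finset.mem_univ i0) h

/-- Bound on the number of simple eigenvalues of a real symmetric automorphism
compatible matrix on a graph with a uniform automorphism of size `k > 1` with
`r = n/k` orbits: at most `r` simple eigenvalues if `k` is odd, and at most `2r`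
if `k` is even. -/
theorem uniform_simple_eigenvalue_bound
    {n k r : ℕ} (hk : 1 < k)
    (φ : Equiv.Perm (Fin n))
    (M : Matrix (Fin n) (Fin n) ℝ)
    (hM : ∀ i j, M (φ i) (φ j) = M i j)
    (hsym : Mᵀ = M)
    (τ : Fin r → Fin n)
    (horb : Function.Bijective (fun p : Fin k × Fin r => (⇑φ)^[p.1.val] (τ p.2)))
    (hper : ∀ i, (⇑φ)^[k] (τ i) = τ i) :
    (Odd k →
      (M.charpoly.roots.toFinset.filter
        (fun μ => M.charpoly.roots.count μ = 1)).card ≤ r) ∧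
    (Even k →
      (M.charpoly.roots.toFinset.filter
        (fun μ => M.charpoly.roots.count μ = 1)).card ≤ 2 * r) := by
  classical
  have hH : M.IsHermitian := by
    ext i j
    simp only [Matrix.conjTranspose_apply, star_trivial]
    exact congrFun (congrFun hsym i) j
  set lam : Fin n → ℝ := hH.eigenvalues with hlam
  set B : Module.Basis (Fin n) ℝ (Fin n → ℝ) :=
    hH.eigenvectorBasis.toBasis.map (WithLp.linearEquiv 2 ℝ _) with hBdef
  have hMB : ∀ j, M *ᵥ (B j) = lam j • B j := by
    intro j
    have h := hH.mulVec_eigenvectorBasis j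
    simpa [hBdef, Module.Basis.map_apply] using h
  have hroots : M.charpoly.roots = Finset.univ.val.map lam := my_roots_charpoly M hH
  set S : Finset ℝ := M.charpoly.roots.toFinset.filter
      (fun μ => M.charpoly.roots.count μ = 1) with hSdef
  -- φ^[k] is the identity
  have hφk : ∀ x : Fin n, (⇑φ)^[k] x = x := by
    intro x
    obtain ⟨⟨p, i⟩, rfl⟩ := horb.surjective x
    show (⇑φ)^[k] ((⇑φ)^[p.val] (τ i)) = (⇑φ)^[p.val] (τ i)
    rw [← Function.iterate_add_apply, Nat.add_comm, Function.iterate_add_apply, hper]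
  -- for each simple eigenvalue, get an eigenbasis index and a sign
  have hex : ∀ μ ∈ S, ∃ (j : Fin n) (e : ℝ), lam j = μ ∧
      (e = 1 ∨ (e = -1 ∧ Even k)) ∧ (∀ x, B j (φ x) = e * B j x) := by
    intro μ hμ
    rw [hSdef, Finset.mem_filter] at hμ
    obtain ⟨-, hcount⟩ := hμ
    rw [hroots, Multiset.count_map] at hcount
    have hcard : (Finset.univ.filter (fun a => μ = lam a)).card = 1 := by
      rw [Finset.card, Finset.filter_val]
      exact hcount
    obtain ⟨i0, hi0⟩ := Finset.card_eq_one.mp hcard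
    have h0 : lam i0 = μ := by
      have : i0 ∈ Finset.univ.filter (fun a => μ = lam a) := by rw [hi0]; simp
      exact ((Finset.mem_filter.mp this).2).symm
    have huniq : ∀ j, lam j = μ → j = i0 := by
      intro j hj
      have : j ∈ Finset.univ.filter (fun a => μ = lam a) := by
        simp [hj.symm]
      rw [hi0] at this
      exact Finset.mem_singleton.mp this
    set v : Fin n → ℝ := B i0 with hvdef
    have hveig : M *ᵥ v = μ • v := by rw [hvdef, hMB, h0]
    -- v ∘ φ is also an eigenvector
    set w : Fin n → ℝ := fun x => v (φ x) with hwdef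
    have hweig : M *ᵥ w = μ • w := by
      funext i
      show ∑ j, M i j * w j = μ * w i
      have step : ∀ j : Fin n, M i j * w j = M (φ i) (φ j) * v (φ j) := by
        intro j
        rw [hM i j]
      rw [Finset.sum_congr rfl (fun j _ => step j)]
      have := Equiv.sum_comp φ (fun j => M (φ i) j * v j)
      rw [this]
      have := congrFun hveig (φ i)
      simpa [Matrix.mulVec, dotProduct] using this
    -- so w = c • v
    set c : ℝ := B.repr w i0 with hcdef
    have hwc : w = c • v := by
      rw [hvdef]
      exact my_eigenspace_le B lam hMB μ i0 huniq w hweig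
    have hcom : ∀ x, v (φ x) = c * v x := by
      intro x
      have := congrFun hwc x
      simpa [hwdef] using this
    -- iterate
    have hiter : ∀ (p : ℕ) (x : Fin n), v ((⇑φ)^[p] x) = c ^ p * v x := by
      intro p
      induction p with
      | zero => intro x; simp
      | succ q ih =>
        intro x
        rw [Function.iterate_succ_apply, ih (φ x), hcom x, pow_succ]
        ring
    -- c^k = 1
    have hvne : ∃ x, v x ≠ 0 := by
      by_contra h
      push_neg at h
      exact B.ne_zero i0 (funext h)
    obtain ⟨x0, hx0⟩ := hvne
    have hck : c ^ k = 1 := by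
      have := hiter k x0
      rw [hφk x0] at this
      have : (c ^ k - 1) * v x0 = 0 := by linarith [this]
      rcases mul_eq_zero.mp this with h | h
      · linarith [h]
      · exact absurd h hx0
    have hcase : c = 1 ∨ (c = -1 ∧ Even k) := by
      rcases pow_eq_one_iff_cases.mp hck with h | h | h
      · omega
      · exact Or.inl h
      · exact Or.inr h
    exact ⟨i0, c, h0, hcase, hcom⟩
  choose! jf ef hj he hcom using hex
  -- main counting bound
  have hbound : ∀ (e : ℝ) (T : Finset ℝ), T ⊆ S → (∀ μ ∈ T, ef μ = e) → T.card ≤ r := by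
    intro e T hTS hTe
    set J : ↥T → Fin n := fun μ => jf μ.val (hTS μ.property) with hJdef
    have hli : LinearIndependent ℝ (fun μ : ↥T => (fun x : Fin r => B (J μ) (τ x))) := by
      rw [Fintype.linearIndependent_iff]
      intro g hg
      -- the unrestricted sum also vanishes
      have hiter : ∀ (μ : ↥T) (p : ℕ) (x : Fin n),
          B (J μ) ((⇑φ)^[p] x) = e ^ p * B (J μ) x := by
        intro μ p
        induction p with
        | zero => intro x; simp
        | succ q ih =>
          intro x
          rw [Function.iterate_succ_apply, ih (φ x),
            hcom μ.val (hTS μ.property) x, hTe μ.val μ.property, pow_succ]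
          ring
      have hfull : ∑ μ : ↥T, g μ • B (J μ) = 0 := by
        funext x
        obtain ⟨⟨p, i⟩, rfl⟩ := horb.surjective x
        show (∑ μ : ↥T, g μ • B (J μ)) ((⇑φ)^[p.val] (τ i)) = 0
        rw [Finset.sum_apply]
        have hstep : ∀ μ : ↥T, (g μ • B (J μ)) ((⇑φ)^[p.val] (τ i))
            = e ^ p.val * (g μ • B (J μ)) (τ i) := by
          intro μ
          simp only [Pi.smul_apply, smul_eq_mul]
          rw [hiter μ p.val (τ i)]
          ring
        rw [Finset.sum_congr rfl (fun μ _ => hstep μ), ← Finset.mul_sum]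
        have := congrFun hg i
        simp only [Finset.sum_apply, Pi.smul_apply, smul_eq_mul, Pi.zero_apply] at this
        simp only [Pi.smul_apply, smul_eq_mul]
        rw [this, mul_zero]
      have hinj : Function.Injective J := by
        intro μ ν hμν
        have h1 : lam (J μ) = μ.val := hj μ.val (hTS μ.property)
        have h2 : lam (J ν) = ν.val := hj ν.val (hTS ν.property)
        apply Subtype.ext
        rw [← h1, ← h2, hμν]
      have := Fintype.linearIndependent_iff.mp
        (B.linearIndependent.comp J hinj) g hfull
      exact this
    have hcard := hli.fintype_card_le_finrank
    rwa [Module.finrank_fin_fun, Fintype.card_coe] at hcard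
  set S1 : Finset ℝ := S.filter (fun μ => ef μ = 1) with hS1def
  set S2 : Finset ℝ := S.filter (fun μ => ef μ = -1) with hS2def
  have hb1 : S1.card ≤ r := hbound 1 S1 (Finset.filter_subset _ _)
    (fun μ hμ => (Finset.mem_filter.mp hμ).2)
  have hb2 : S2.card ≤ r := hbound (-1) S2 (Finset.filter_subset _ _)
    (fun μ hμ => (Finset.mem_filter.mp hμ).2)
  constructor
  · intro hodd
    have hsub : S ⊆ S1 := by
      intro μ hμ
      rcases he μ hμ with h | ⟨h, heven⟩
      · exact Finset.mem_filter.mpr ⟨hμ, h⟩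
      · exact absurd heven (Nat.not_even_iff_odd.mpr hodd)
    calc S.card ≤ S1.card := Finset.card_le_card hsub
      _ ≤ r := hb1
  · intro _
    have hsub : S ⊆ S1 ∪ S2 := by
      intro μ hμ
      rcases he μ hμ with h | ⟨h, -⟩
      · exact Finset.mem_union_left _ (Finset.mem_filter.mpr ⟨hμ, h⟩)
      · exact Finset.mem_union_right _ (Finset.mem_filter.mpr ⟨hμ, h⟩)
    calc S.card ≤ (S1 ∪ S2).card := Finset.card_le_card hsub
      _ ≤ S1.card + S2.card := Finset.card_union_le _ _
      _ ≤ 2 * r := by omega
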